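/- Let E ⊆ [0,∞), let γ̃ = {γₙ} be an almost decreasing sequence in E∖{0} with γₙ → 0, and let {(aₙ,bₙ)} ∈ Ĩ_E with ã = {aₙ}. Then γ̃ ≍ ã (i.e., there exist constants c₁,c₂ > 0 with c₁aₙ ≤ γₙ ≤ c₂aₙ for sufficiently large n) if and only if limsup_{n→∞} aₙ/γₙ < ∞ and γₙ ≤ aₙ for sufficiently large n. -/

import Mathlib

open Filter Set Topology ENNReal

/-- λ(E,0,h): the supremum of lengths of open subintervals of (0,h) disjoint from E. -/
noncomputable def lambda0 (E : Set ℝ) (h : ℝ) : ℝ :=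
  sSup {l : ℝ | ∃ a b : ℝ, 0 ≤ a ∧ a ≤ b ∧ b ≤ h ∧ Set.Ioo a b ∩ E = ∅ ∧ l = b - a}

/-- p⁺(E,0): the right porosity of E at 0. -/
noncomputable def porosity (E : Set ℝ) : ℝ :=
  Filter.limsup (fun h => lambda0 E h / h) (nhdsWithin 0 (Set.Ioi 0))

/-- 0 is an accumulation point of E (E ⊆ [0,∞), relative topology of [0,∞)). -/
def AccZero (E : Set ℝ) : Prop := ∀ ε > 0, ∃ x ∈ E, 0 < x ∧ x < ε

/-- (a,b) is a connected component of the exterior of E in [0,∞):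
an open interval in [0,∞) disjoint from E, maximal with this property. -/
def IsCompExt (E : Set ℝ) (a b : ℝ) : Prop :=
  0 ≤ a ∧ a < b ∧ Set.Ioo a b ∩ E = ∅ ∧
  ∀ c d : ℝ, 0 ≤ c → Set.Ioo a b ⊆ Set.Ioo c d → (c, d) ≠ (a, b) → Set.Ioo c d ∩ E ≠ ∅

/-- Membership in Ĩ_E. -/
def memIE (E : Set ℝ) (A : ℕ → ℝ × ℝ) : Prop :=
  (∀ n, 0 < (A n).1) ∧ (∀ n, IsCompExt E (A n).1 (A n).2) ∧
  Filter.Tendsto (fun n => (A n).1) Filter.atTop (nhds 0) ∧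
  Filter.Tendsto (fun n => ((A n).2 - (A n).1) / (A n).2) Filter.atTop (nhds 1)

/-- Almost decreasing sequence: eventually nonincreasing. -/
def AlmostDecr (τ : ℕ → ℝ) : Prop := ∀ᶠ n in Filter.atTop, τ (n + 1) ≤ τ n

/-- Membership in Ẽ₀^d: almost decreasing sequences in E∖{0} tending to 0. -/
def memE0d (E : Set ℝ) (τ : ℕ → ℝ) : Prop :=
  AlmostDecr τ ∧ Filter.Tendsto τ Filter.atTop (nhds 0) ∧ ∀ n, τ n ∈ E \ {0}

/-- Weak equivalence ≍ of sequences: c₁ aₙ ≤ γₙ ≤ c₂ aₙ for large n. -/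
def SeqEquiv (a γ : ℕ → ℝ) : Prop :=
  ∃ c₁ c₂ : ℝ, 0 < c₁ ∧ 0 < c₂ ∧ ∀ᶠ n in Filter.atTop, c₁ * a n ≤ γ n ∧ γ n ≤ c₂ * a n

/-- E is τ̃-strongly porous. -/
def StronglyPorousWrt (E : Set ℝ) (τ : ℕ → ℝ) : Prop :=
  ∃ A : ℕ → ℝ × ℝ, memIE E A ∧ SeqEquiv (fun n => (A n).1) τ

/-- E is completely strongly porous at 0. -/
def CSP (E : Set ℝ) : Prop := ∀ τ : ℕ → ℝ, memE0d E τ → StronglyPorousWrt E τ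

/-- Membership in Ĩ_E^d: first coordinates almost decreasing. -/
def memIEd (E : Set ℝ) (A : ℕ → ℝ × ℝ) : Prop := memIE E A ∧ AlmostDecr (fun n => (A n).1)

/-- Membership in Ĩ_E^{sd}: first coordinates eventually strictly decreasing. -/
def memIEsd (E : Set ℝ) (A : ℕ → ℝ × ℝ) : Prop :=
  memIE E A ∧ ∀ᶠ n in Filter.atTop, (A (n + 1)).1 < (A n).1

/-- The preorder Ã ⪯ L̃. -/
def Prec (A L : ℕ → ℝ × ℝ) : Prop :=
  ∃ N₁ : ℕ, ∃ f : ℕ → ℕ, ∀ n ≥ N₁, (A n).1 = (L (f n)).1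

/-- L̃ is universal: every Ã ∈ Ĩ_E^d satisfies Ã ⪯ L̃. -/
def Universal (E : Set ℝ) (L : ℕ → ℝ × ℝ) : Prop :=
  ∀ A : ℕ → ℝ × ℝ, memIEd E A → Prec A L

/-- M(L̃) = limsup lₙ/mₙ₊₁ (in [0,∞]). -/
noncomputable def Mq (L : ℕ → ℝ × ℝ) : ℝ≥0∞ :=
  Filter.limsup (fun n => ENNReal.ofReal ((L n).1 / (L (n + 1)).2)) Filter.atTop

/-- C(τ̃) = inf over {(aₙ,bₙ)} ∈ Ĩ_E with τₙ ≤ aₙ eventually of limsup aₙ/τₙ. -/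
noncomputable def Cseq (E : Set ℝ) (τ : ℕ → ℝ) : ℝ≥0∞ :=
  ⨅ (A : ℕ → ℝ × ℝ) (_ : memIE E A ∧ ∀ᶠ n in Filter.atTop, τ n ≤ (A n).1),
    Filter.limsup (fun n => ENNReal.ofReal ((A n).1 / τ n)) Filter.atTop

/-- C_E = sup over τ̃ ∈ Ẽ₀^d of C(τ̃). -/
noncomputable def CE (E : Set ℝ) : ℝ≥0∞ := ⨆ (τ : ℕ → ℝ) (_ : memE0d E τ), Cseq E τ

/-- E is uniformly strongly porous at 0. -/
def USP (E : Set ℝ) : Prop :=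
  ∃ c : ℝ, 0 < c ∧ ∀ τ : ℕ → ℝ, memE0d E τ → ∃ A : ℕ → ℝ × ℝ, memIE E A ∧
    (∀ᶠ n in Filter.atTop, τ n ≤ (A n).1) ∧
    Filter.limsup (fun n => ENNReal.ofReal ((A n).1 / τ n)) Filter.atTop ≤ ENNReal.ofReal c

theorem stmt2 (E : Set ℝ) (hE : E ⊆ Set.Ici 0) (γ : ℕ → ℝ) (hγ : memE0d E γ)
    (A : ℕ → ℝ × ℝ) (hA : memIE E A) :
    SeqEquiv (fun n => (A n).1) γ ↔
      (Filter.limsup (fun n => ENNReal.ofReal ((A n).1 / γ n)) Filter.atTop < ⊤ ∧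
        ∀ᶠ n in Filter.atTop, γ n ≤ (A n).1) := by
  obtain ⟨hdec, hγ0, hmem⟩ := hγ
  obtain ⟨hpos, hcomp, ha0, hratio⟩ := hA
  have hγpos : ∀ n, 0 < γ n := by
    intro n
    have h1 : (0:ℝ) ≤ γ n := hE (hmem n).1
    have h2 : γ n ≠ 0 := (hmem n).2
    exact lt_of_le_of_ne h1 (Ne.symm h2)
  have hbpos : ∀ n, 0 < (A n).2 :=
    fun n => lt_trans (hpos n) (hcomp n).2.1
  constructor
  · rintro ⟨c₁, c₂, hc₁, hc₂, hev⟩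
    constructor
    · refine lt_of_le_of_lt (Filter.limsup_le_of_le (by isBoundedDefault) ?_)
        (ENNReal.ofReal_lt_top : ENNReal.ofReal (1/c₁) < ⊤)
      filter_upwards [hev] with n hn
      refine ENNReal.ofReal_le_ofReal ?_
      rw [div_le_div_iff₀ (hγpos n) hc₁]
      nlinarith [hn.1]
    · have hab : Filter.Tendsto (fun n => (A n).1 / (A n).2) Filter.atTop (nhds 0) := by
        have : (fun n => (A n).1 / (A n).2)
            = (fun n => 1 - ((A n).2 - (A n).1) / (A n).2) := by
          funext n
          have hb := (hbpos n).ne'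
          field_simp
          ring
        rw [this]
        have h := Filter.Tendsto.sub (tendsto_const_nhds (x := (1:ℝ))) hratio
        rw [sub_self] at h
        exact h
      have hsmall : ∀ᶠ n in Filter.atTop, (A n).1 / (A n).2 < c₂⁻¹ :=
        hab.eventually (gt_mem_nhds (by positivity))
      filter_upwards [hev, hsmall] with n hn hs
      by_contra hcon
      push_neg at hcon
      have hlt : γ n < (A n).2 := by
        have : c₂ * (A n).1 < (A n).2 := by
          rw [div_lt_iff₀ (hbpos n)] at hs
          have := hbpos n
          have := hpos n
          nlinarith [mul_inv_cancel₀ (ne_of_gt hc₂)]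
        linarith [hn.2]
      have : γ n ∈ Set.Ioo (A n).1 (A n).2 ∩ E := ⟨⟨hcon, hlt⟩, (hmem n).1⟩
      rw [(hcomp n).2.2.1] at this
      exact this
  · rintro ⟨hlim, hle⟩
    set L := Filter.limsup (fun n => ENNReal.ofReal ((A n).1 / γ n)) Filter.atTop with hL
    have hLne : L ≠ ⊤ := hlim.ne
    have hev : ∀ᶠ n in Filter.atTop, ENNReal.ofReal ((A n).1 / γ n) < L + 1 :=
      Filter.eventually_lt_of_limsup_lt (ENNReal.lt_add_right hLne one_ne_zero)
    set C := (L + 1).toReal with hC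
    have hCtop : L + 1 ≠ ⊤ := by simp [hLne]
    have hCpos : 0 < C := ENNReal.toReal_pos (by simp) hCtop
    refine ⟨C⁻¹, 1, by positivity, one_pos, ?_⟩
    filter_upwards [hev, hle] with n hn hl
    refine ⟨?_, by simpa using hl⟩
    have h1 : (A n).1 / γ n < C := by
      rwa [ENNReal.ofReal_lt_iff_lt_toReal (div_nonneg (hpos n).le (hγpos n).le) hCtop] at hn
    rw [div_lt_iff₀ (hγpos n)] at h1
    rw [inv_mul_le_iff₀ hCpos]
    nlinarith
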